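/- arXiv:2308.00001 — 5 statements merged into one kernel-verified Lean document; each statement's English description precedes it below -/
import Mathlib

section
/- In the model M1, for every formula φ of the language Φ (with single propositional variable p and single name Ann), if the truth set [φ] belongs to the family {[p], [⊥], [¬p], [⊤]}, then the truth set [R_Ann φ] also belongs to the family {[p], [⊥], [¬p], [⊤]}. -/
/-- Formulas of the language Φ: φ ::= p | ¬φ | φ∨φ | @ₙφ | Rₙφ | Dₙφ,
where `P` is the type of propositional variables and `N` the type of names. -/
inductive Formula (P N : Type) : Type
  | var : P → Formula P N
  | neg : Formula P N → Formula P N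
  | disj : Formula P N → Formula P N → Formula P N
  | at_ : N → Formula P N → Formula P N
  | re : N → Formula P N → Formula P N
  | de : N → Formula P N → Formula P N

/-- An epistemic model with extensions. -/
structure Model (P N : Type) where
  W : Type
  A : Type
  sim : A → W → W → Prop
  sim_equiv : ∀ a, Equivalence (sim a)
  ext : W → N → A
  val : P → Set (W × A)

/-- The satisfaction relation `w, a ⊨ φ`. -/
def Model.sat {P N : Type} (M : Model P N) : Formula P N → M.W → M.A → Prop
  | .var p, w, a => (w, a) ∈ M.val p
  | .neg φ, w, a => ¬ M.sat φ w a
  | .disj φ ψ, w, a => M.sat φ w a ∨ M.sat ψ w a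
  | .at_ n φ, w, _ => M.sat φ w (M.ext w n)
  | .re n φ, w, a => ∀ u, M.sim a w u → M.sat φ u (M.ext w n)
  | .de n φ, w, a => ∀ u, M.sim a w u → M.sat φ u (M.ext u n)

/-- The truth set ⟦φ⟧ of a formula. -/
def Model.truthSet {P N : Type} (M : Model P N) (φ : Formula P N) : Set (M.W × M.A) :=
  {x | M.sat φ x.1 x.2}

/-- The model M1: worlds w=0, u=1, v=2, t=3; agents a=0, b=1;
each agent only fails to distinguish w from u and v from t;
Ann refers to a in w,v and to b in u,t; π(p) = {(w,a),(u,b),(v,b),(t,a)}. -/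
def M1 : Model Unit Unit where
  W := Fin 4
  A := Fin 2
  sim := fun _ s t => (s : ℕ) / 2 = (t : ℕ) / 2
  sim_equiv := fun _ => ⟨fun _ => rfl, Eq.symm, Eq.trans⟩
  ext := fun w _ => if (w : ℕ) % 2 = 0 then 0 else 1
  val := fun _ => {((0 : Fin 4), (0 : Fin 2)), (1, 1), (2, 1), (3, 0)}

/-- The family of truth sets {⟦p⟧, ⟦⊥⟧, ⟦¬p⟧, ⟦⊤⟧} in M1 (⟦⊥⟧ = ∅, ⟦⊤⟧ = W×A). -/
def Fam1 : Set (Set (M1.W × M1.A)) :=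
  {M1.truthSet (.var ()), ∅, M1.truthSet (.neg (.var ())), Set.univ}

lemma var_ts : M1.truthSet (.var ()) =
    ({((0 : Fin 4), (0 : Fin 2)), (1, 1), (2, 1), (3, 0)} : Set (Fin 4 × Fin 2)) := rfl

lemma negvar_ts : M1.truthSet (.neg (.var ())) =
    ({((0 : Fin 4), (0 : Fin 2)), (1, 1), (2, 1), (3, 0)} : Set (Fin 4 × Fin 2))ᶜ := by
  ext x; simp [Model.truthSet, Model.sat, M1]
  exact Iff.rfl

lemma sat_iff_mem (φ : Formula Unit Unit) (w : M1.W) (a : M1.A) :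
    M1.sat φ w a ↔ (w, a) ∈ M1.truthSet φ := Iff.rfl

lemma re_truthSet (φ : Formula Unit Unit) :
    M1.truthSet (.re () φ) =
      {x : Fin 4 × Fin 2 | ∀ u : Fin 4, (x.1 : ℕ) / 2 = (u : ℕ) / 2 →
        (u, M1.ext x.1 ()) ∈ M1.truthSet φ} := by
  ext x
  simp only [Model.truthSet, Set.mem_setOf_eq]
  constructor
  · intro hx u hu
    exact hx u hu
  · intro hx u hu
    exact hx u hu

/-- In M1, if ⟦φ⟧ ∈ {⟦p⟧, ⟦⊥⟧, ⟦¬p⟧, ⟦⊤⟧}, then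
⟦R_Ann φ⟧ ∈ {⟦p⟧, ⟦⊥⟧, ⟦¬p⟧, ⟦⊤⟧}. -/
theorem re_closed_in_M1 (φ : Formula Unit Unit) (h : M1.truthSet φ ∈ Fam1) :
    M1.truthSet (.re () φ) ∈ Fam1 := by
  rcases h with h | h | h | h
  · right; left
    rw [re_truthSet, h, var_ts]
    ext ⟨w, a⟩
    simp only [Set.mem_setOf_eq, Set.mem_empty_iff_false, iff_false]
    refine ⟨fun hx => ?_, fun h' => absurd h' (Set.notMem_empty _)⟩
    fin_cases w
    · exact absurd (hx 1 rfl) (by simp [M1, Prod.ext_iff]; change ¬ (_ : Fin 4 × Fin 2) ∈ (_ : Set (Fin 4 × Fin 2)); simp [Prod.ext_iff])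
    · exact absurd (hx 0 rfl) (by simp [M1, Prod.ext_iff]; change ¬ (_ : Fin 4 × Fin 2) ∈ (_ : Set (Fin 4 × Fin 2)); simp [Prod.ext_iff])
    · exact absurd (hx 2 rfl) (by simp [M1, Prod.ext_iff]; change ¬ (_ : Fin 4 × Fin 2) ∈ (_ : Set (Fin 4 × Fin 2)); simp [Prod.ext_iff])
    · exact absurd (hx 3 rfl) (by simp [M1, Prod.ext_iff]; change ¬ (_ : Fin 4 × Fin 2) ∈ (_ : Set (Fin 4 × Fin 2)); simp [Prod.ext_iff])
  · right; left
    rw [re_truthSet, h]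
    ext ⟨w, a⟩
    simp only [Set.mem_setOf_eq, Set.mem_empty_iff_false, iff_false]
    refine ⟨fun hx => ?_, fun h' => absurd h' (Set.notMem_empty _)⟩
    exact hx w rfl
  · right; left
    rw [re_truthSet, h, negvar_ts]
    ext ⟨w, a⟩
    simp only [Set.mem_setOf_eq, Set.mem_empty_iff_false, iff_false]
    refine ⟨fun hx => ?_, fun h' => absurd h' (Set.notMem_empty _)⟩
    fin_cases w
    · exact absurd (hx 0 rfl) (by simp [M1, Prod.ext_iff]; change ¬ (_ : Fin 4 × Fin 2) ∈ (_ : Set (Fin 4 × Fin 2)); simp [Prod.ext_iff])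
    · exact absurd (hx 1 rfl) (by simp [M1, Prod.ext_iff]; change ¬ (_ : Fin 4 × Fin 2) ∈ (_ : Set (Fin 4 × Fin 2)); simp [Prod.ext_iff])
    · exact absurd (hx 3 rfl) (by simp [M1, Prod.ext_iff]; change ¬ (_ : Fin 4 × Fin 2) ∈ (_ : Set (Fin 4 × Fin 2)); simp [Prod.ext_iff])
    · exact absurd (hx 2 rfl) (by simp [M1, Prod.ext_iff]; change ¬ (_ : Fin 4 × Fin 2) ∈ (_ : Set (Fin 4 × Fin 2)); simp [Prod.ext_iff])
  · right; right; right
    rw [Set.mem_singleton_iff] at h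
    rw [re_truthSet, h]
    change _ = Set.univ
    ext ⟨w, a⟩
    simp
    exact fun _ _ => trivial
end

section
/- In the model M1, for every formula φ of the language Φ (with single propositional variable p and single name Ann) that does not use the modalities D and @, the truth set [φ] belongs to the family {[p], [⊥], [¬p], [⊤]}. -/
/-- A formula does not use the modalities D and @. -/
def Formula.noDeAt {P N : Type} : Formula P N → Prop
  | .var _ => True
  | .neg φ => φ.noDeAt
  | .disj φ ψ => φ.noDeAt ∧ ψ.noDeAt
  | .at_ _ _ => False
  | .re _ φ => φ.noDeAt
  | .de _ _ => False

-- auxiliary lemmas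
abbrev Sp : Set (M1.W × M1.A) := M1.truthSet (.var ())

lemma negS_eq : M1.truthSet (Formula.neg (.var ())) = Spᶜ := rfl

lemma Fam1_eq : Fam1 = {Sp, ∅, Spᶜ, Set.univ} := by
  simp [Fam1, negS_eq]

lemma truthSet_neg (φ : Formula Unit Unit) :
    M1.truthSet (Formula.neg φ) = (M1.truthSet φ)ᶜ := rfl

lemma truthSet_disj (φ ψ : Formula Unit Unit) :
    M1.truthSet (Formula.disj φ ψ) = M1.truthSet φ ∪ M1.truthSet ψ := rfl

instance : Fintype M1.W := inferInstanceAs (Fintype (Fin 4))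
instance : DecidableEq M1.W := inferInstanceAs (DecidableEq (Fin 4))
instance (n : ℕ) [NeZero n] : OfNat M1.W n := inferInstanceAs (OfNat (Fin 4) n)
instance : OfNat M1.W 0 := inferInstanceAs (OfNat (Fin 4) 0)

def Rset (X : Set (M1.W × M1.A)) : Set (M1.W × M1.A) :=
  {x | ∀ u, M1.sim x.2 x.1 u → (u, M1.ext x.1 ()) ∈ X}

lemma truthSet_re (φ : Formula Unit Unit) :
    M1.truthSet (Formula.re () φ) = Rset (M1.truthSet φ) := rfl

lemma Rset_univ : Rset Set.univ = Set.univ := by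
  ext x; simp [Rset]

lemma Rset_empty : Rset ∅ = ∅ := by
  ext ⟨w, a⟩
  simp only [Rset, Set.mem_setOf_eq, Set.mem_empty_iff_false, iff_false, not_forall]
  exact ⟨w, (M1.sim_equiv a).refl w, fun h => h⟩

lemma Rset_S : Rset Sp = ∅ := by
  ext ⟨w, a⟩
  simp only [Rset, Set.mem_setOf_eq, Set.mem_empty_iff_false, iff_false, not_forall]
  fin_cases w
  · exact ⟨1, rfl, by simp [Sp, M1, Model.truthSet, Model.sat] <;> exact fun h => by rcases h with h|h|h|h <;> cases h⟩
  · exact ⟨0, rfl, by simp [Sp, M1, Model.truthSet, Model.sat] <;> exact fun h => by rcases h with h|h|h|h <;> cases h⟩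
  · exact ⟨2, rfl, by simp [Sp, M1, Model.truthSet, Model.sat] <;> exact fun h => by rcases h with h|h|h|h <;> cases h⟩
  · exact ⟨3, rfl, by simp [Sp, M1, Model.truthSet, Model.sat] <;> exact fun h => by rcases h with h|h|h|h <;> cases h⟩

lemma Rset_Sc : Rset Spᶜ = ∅ := by
  ext ⟨w, a⟩
  simp only [Rset, Set.mem_setOf_eq, Set.mem_empty_iff_false, iff_false, not_forall]
  fin_cases w
  · exact ⟨0, rfl, by simp [Sp, M1, Model.truthSet, Model.sat] <;> exact fun h => h (Or.inl rfl)⟩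
  · exact ⟨1, rfl, by simp [Sp, M1, Model.truthSet, Model.sat] <;> exact fun h => h (Or.inr (Or.inl rfl))⟩
  · exact ⟨3, rfl, by simp [Sp, M1, Model.truthSet, Model.sat] <;> exact fun h => h (Or.inr (Or.inr (Or.inr rfl)))⟩
  · exact ⟨2, rfl, by simp [Sp, M1, Model.truthSet, Model.sat] <;> exact fun h => h (Or.inr (Or.inr (Or.inl rfl)))⟩

/-- In M1, for every formula φ not using the modalities D and @,
⟦φ⟧ ∈ {⟦p⟧, ⟦⊥⟧, ⟦¬p⟧, ⟦⊤⟧}. -/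
theorem noDeAt_truthSet_in_Fam1 (φ : Formula Unit Unit) (h : φ.noDeAt) :
    M1.truthSet φ ∈ Fam1 := by
  rw [Fam1_eq]
  induction φ with
  | var p => simp [Sp]
  | neg φ ih =>
    rw [truthSet_neg]
    rcases ih h with h1 | h1 | h1 | h1 <;> rw [h1] <;> simp
  | disj φ ψ ihφ ihψ =>
    rw [truthSet_disj]
    rcases ihφ h.1 with h1 | h1 | h1 | h1 <;> rcases ihψ h.2 with h2 | h2 | h2 | h2 <;>
      rw [h1, h2] <;> simp [Set.union_comm]
  | at_ n φ ih => exact absurd h (by simp [Formula.noDeAt])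
  | re n φ ih =>
    obtain ⟨⟩ := n
    rw [truthSet_re]
    rcases ih h with h1 | h1 | h1 | h1 <;> rw [h1] <;>
      simp [Rset_S, Rset_empty, Rset_Sc, Rset_univ]
  | de n φ ih => exact absurd h (by simp [Formula.noDeAt])
end

section
/- In the model M1, the truth set [D_Ann p] does not belong to the family {[p], [⊥], [¬p], [⊤]}. -/
/-- In M1, ⟦D_Ann p⟧ ∉ {⟦p⟧, ⟦⊥⟧, ⟦¬p⟧, ⟦⊤⟧}. -/
theorem de_p_not_in_Fam1 :
    M1.truthSet (.de () (.var ())) ∉ Fam1 := by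
  intro h
  rcases h with h | h | h | h
  · have := (Set.ext_iff.mp h) ((0 : Fin 4), (1 : Fin 2))
    simp [Model.truthSet, Model.sat, M1] at this
    revert this; change ((∀ u : Fin 4, (0 : ℕ) / 2 = (u : ℕ) / 2 → ((u, if (u : ℕ) % 2 = 0 then 0 else 1) : Fin 4 × Fin 2) ∈ ({(0, 0), (1, 1), (2, 1), (3, 0)} : Set (Fin 4 × Fin 2))) ↔ ((0 : Fin 4), (1 : Fin 2)) ∈ ({(0, 0), (1, 1), (2, 1), (3, 0)} : Set (Fin 4 × Fin 2))) → False; decide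
  · have := (Set.ext_iff.mp h) ((0 : Fin 4), (0 : Fin 2))
    simp [Model.truthSet, Model.sat, M1] at this
    revert this; change ((∀ u : Fin 4, (0 : ℕ) / 2 = (u : ℕ) / 2 → ((u, if (u : ℕ) % 2 = 0 then 0 else 1) : Fin 4 × Fin 2) ∈ ({(0, 0), (1, 1), (2, 1), (3, 0)} : Set (Fin 4 × Fin 2))) ↔ False) → False; decide
  · have := (Set.ext_iff.mp h) ((0 : Fin 4), (0 : Fin 2))
    simp [Model.truthSet, Model.sat, M1] at this
    revert this; change ((∀ u : Fin 4, (0 : ℕ) / 2 = (u : ℕ) / 2 → ((u, if (u : ℕ) % 2 = 0 then 0 else 1) : Fin 4 × Fin 2) ∈ ({(0, 0), (1, 1), (2, 1), (3, 0)} : Set (Fin 4 × Fin 2))) ↔ ((0 : Fin 4), (0 : Fin 2)) ∉ ({(0, 0), (1, 1), (2, 1), (3, 0)} : Set (Fin 4 × Fin 2))) → False; decide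
  · have := (Set.ext_iff.mp h) ((2 : Fin 4), (0 : Fin 2))
    simp [Model.truthSet, Model.sat, M1] at this
    revert this; change ((∀ u : Fin 4, (2 : ℕ) / 2 = (u : ℕ) / 2 → ((u, if (u : ℕ) % 2 = 0 then 0 else 1) : Fin 4 × Fin 2) ∈ ({(0, 0), (1, 1), (2, 1), (3, 0)} : Set (Fin 4 × Fin 2))) ↔ True) → False; decide
end

section
/- The formula D_Ann p is not semantically equivalent to any formula of the language Φ that does not use the modalities D and @; that is, for every formula φ built only from the propositional variable p, negation, disjunction, and the modalities R_n, there exists an epistemic model with extensions in which the truth set of D_Ann p differs from the truth set of φ. -/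
abbrev MM : Model Unit Unit :=
  { W := Fin 3
    A := Bool
    sim := fun a w u => a = true → ((w = 2) ↔ (u = 2))
    sim_equiv := fun a =>
      ⟨fun _ _ => Iff.rfl, fun h ha => (h ha).symm, fun h h' ha => (h ha).trans (h' ha)⟩
    ext := fun w _ => decide (w ≠ 0)
    val := fun _ => {x | x.1 ≠ 2 ∧ (x.2 = true ∨ x.1 = 0)} }

lemma simF (w u : Fin 3) : MM.sim false w u := fun h => Bool.noConfusion h

lemma ext1 : MM.ext 1 () = true := by decide
lemma ext2 : MM.ext 2 () = true := by decide
lemma ext0 : MM.ext 0 () = false := by decide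

lemma satvar (w : Fin 3) (a : Bool) :
    MM.sat (.var ()) w a ↔ (w ≠ 2 ∧ (a = true ∨ w = 0)) := Iff.rfl

lemma L2 : ∀ φ : Formula Unit Unit, φ.noDeAt →
    (MM.sat φ 1 false ↔ MM.sat φ 2 false) := by
  intro φ
  induction φ with
  | var p => intro _; rw [satvar, satvar]; decide
  | neg ψ ih => intro h; exact not_congr (ih h)
  | disj ψ χ ih1 ih2 => intro h; exact or_congr (ih1 h.1) (ih2 h.2)
  | at_ n ψ ih => intro h; exact h.elim
  | de n ψ ih => intro h; exact h.elim
  | re n ψ ih =>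
    intro _
    show (∀ u, MM.sim false 1 u → MM.sat ψ u (MM.ext 1 ())) ↔
         (∀ u, MM.sim false 2 u → MM.sat ψ u (MM.ext 2 ()))
    rw [ext1, ext2]
    exact ⟨fun hs u _ => hs u (simF 1 u), fun hs u _ => hs u (simF 2 u)⟩

lemma L1 : ∀ φ : Formula Unit Unit, φ.noDeAt →
    (MM.sat φ 0 false ↔ MM.sat φ 0 true) := by
  intro φ
  induction φ with
  | var p => intro _; rw [satvar, satvar]; decide
  | neg ψ ih => intro h; exact not_congr (ih h)
  | disj ψ χ ih1 ih2 => intro h; exact or_congr (ih1 h.1) (ih2 h.2)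
  | at_ n ψ ih => intro h; exact h.elim
  | de n ψ ih => intro h; exact h.elim
  | re n ψ ih =>
    intro h
    show (∀ u, MM.sim false 0 u → MM.sat ψ u (MM.ext 0 ())) ↔
         (∀ u, MM.sim true 0 u → MM.sat ψ u (MM.ext 0 ()))
    rw [ext0]
    constructor
    · exact fun hs u _ => hs u (simF 0 u)
    · intro hs u _
      fin_cases u
      · exact hs 0 (fun _ => by decide)
      · exact hs 1 (fun _ => by decide)
      · exact (L2 ψ h).mp (hs 1 (fun _ => by decide))

lemma DpT : MM.sat (.de () (.var ())) 0 true := by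
  intro u hu
  have hu2 : u ≠ 2 := fun e => absurd ((hu rfl).mpr e) (by decide)
  rw [satvar]
  refine ⟨hu2, ?_⟩
  rcases eq_or_ne u 0 with rfl | h0
  · exact Or.inr rfl
  · exact Or.inl (decide_eq_true h0)

lemma DpF : ¬ MM.sat (.de () (.var ())) 0 false := by
  intro hs
  have h2 := hs 2 (simF 0 2)
  rw [ext2, satvar] at h2
  exact absurd h2 (by decide)

/-- D_Ann p is not semantically equivalent to any formula that does
not use the modalities D and @: for every such formula φ there is an epistemic
model with extensions in which ⟦D_Ann p⟧ ≠ ⟦φ⟧. -/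
theorem de_undefinable_via_re (φ : Formula Unit Unit) (h : φ.noDeAt) :
    ∃ M : Model Unit Unit, M.truthSet (.de () (.var ())) ≠ M.truthSet φ := by
  refine ⟨MM, fun heq => ?_⟩
  have h1 : ((0 : Fin 3), true) ∈ MM.truthSet φ := by rw [← heq]; exact DpT
  have h2 : ((0 : Fin 3), false) ∈ MM.truthSet φ := (L1 φ h).mpr h1
  have h3 : ((0 : Fin 3), false) ∈ MM.truthSet (Formula.de () (.var ())) := by
    rw [heq]; exact h2
  exact DpF h3
end

section
/- In the semantics with agent-specific names, if the language contains a name constant 'se' (self) and a model satisfies e^a_w(se) = a for every agent a and every world w, then for any world w, agent a, name n, and formula φ, it holds that w,a ⊨ D_n φ if and only if w,a ⊨ R_se @_n φ. -/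
/-- An epistemic model with agent-specific extensions. -/
structure ModelA (P N : Type) where
  W : Type
  A : Type
  sim : A → W → W → Prop
  sim_equiv : ∀ a, Equivalence (sim a)
  ext : W → A → N → A
  val : P → Set (W × A)

/-- The satisfaction relation `w, a ⊨ φ` for agent-specific extensions. -/
def ModelA.sat {P N : Type} (M : ModelA P N) : Formula P N → M.W → M.A → Prop
  | .var p, w, a => (w, a) ∈ M.val p
  | .neg φ, w, a => ¬ M.sat φ w a
  | .disj φ ψ, w, a => M.sat φ w a ∨ M.sat ψ w a
  | .at_ n φ, w, a => M.sat φ w (M.ext w a n)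
  | .re n φ, w, a => ∀ u, M.sim a w u → M.sat φ u (M.ext w a n)
  | .de n φ, w, a => ∀ u, M.sim a w u → M.sat φ u (M.ext u a n)

/-- The truth set ⟦φ⟧ of a formula, agent-specific setting. -/
def ModelA.truthSet {P N : Type} (M : ModelA P N) (φ : Formula P N) : Set (M.W × M.A) :=
  {x | M.sat φ x.1 x.2}

/-- With agent-specific names, if the model has a name constant
`se` (self) with e^a_w(se) = a for all a, w, then w,a ⊨ Dₙφ iff w,a ⊨ R_se @ₙφ. -/
theorem de_definable_with_self (P N : Type) (M : ModelA P N) (se : N)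
    (hse : ∀ (w : M.W) (a : M.A), M.ext w a se = a)
    (w : M.W) (a : M.A) (n : N) (φ : Formula P N) :
    M.sat (.de n φ) w a ↔ M.sat (.re se (.at_ n φ)) w a := by
  simp only [ModelA.sat, hse]
end
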